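/- If K : E×E → ℝ is a negative definite kernel, then K^H (pointwise H-th power, assuming K ≥ 0) is a negative definite kernel for every 0 ≤ H ≤ 1. -/

import Mathlib

open MeasureTheory ProbabilityTheory Real BigOperators

noncomputable def Wsq (μ ν : MeasureTheory.Measure ℝ) : ℝ :=
  sInf { c : ℝ | ∃ m : MeasureTheory.Measure (ℝ × ℝ),
    m.map Prod.fst = μ ∧ m.map Prod.snd = ν ∧ c = ∫ p, (p.1 - p.2) ^ 2 ∂m }

/-- Quadratic Wasserstein distance. -/
noncomputable def W2 (μ ν : MeasureTheory.Measure ℝ) : ℝ := Real.sqrt (Wsq μ ν)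

/-- Finite second moment. -/
def FiniteSecondMoment (μ : MeasureTheory.Measure ℝ) : Prop :=
  MeasureTheory.Integrable (fun x => x ^ 2) μ

section
open Finset Set

lemma gram_pow_nonneg {n : ℕ} (v : Fin n → Fin n → ℝ) (d : Fin n → ℝ) (k : ℕ) :
    0 ≤ ∑ i, ∑ j, d i * d j * (∑ m, v i m * v j m) ^ k := by
  have key : ∀ i j : Fin n, (∑ m, v i m * v j m) ^ k
      = ∑ α ∈ Fintype.piFinset (fun _ : Fin k => (univ : Finset (Fin n))),
          (∏ t, v i (α t)) * (∏ t, v j (α t)) := by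
    intro i j
    rw [← Fin.prod_const k, Finset.prod_univ_sum]
    exact Finset.sum_congr rfl fun α _ => by rw [Finset.prod_mul_distrib]
  calc (0:ℝ) ≤ ∑ α ∈ Fintype.piFinset (fun _ : Fin k => (univ : Finset (Fin n))),
        (∑ i, d i * ∏ t, v i (α t)) ^ 2 :=
      Finset.sum_nonneg fun α _ => sq_nonneg _
    _ = ∑ i, ∑ j, d i * d j * (∑ m, v i m * v j m) ^ k := by
      simp_rw [key, sq, Finset.sum_mul_sum, Finset.mul_sum]
      rw [Finset.sum_comm]
      refine Finset.sum_congr rfl fun i _ => ?_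
      rw [Finset.sum_comm]
      refine Finset.sum_congr rfl fun j _ => Finset.sum_congr rfl fun α _ => by ring

open scoped MatrixOrder in
lemma psd_gram {n : ℕ} (B : Matrix (Fin n) (Fin n) ℝ)
    (hsymm : ∀ i j, B i j = B j i)
    (hq : ∀ d : Fin n → ℝ, 0 ≤ ∑ i, ∑ j, d i * d j * B i j) :
    ∃ v : Fin n → Fin n → ℝ, ∀ i j, B i j = ∑ m, v i m * v j m := by
  have hherm : B.IsHermitian := by
    ext i j
    simpa using (hsymm j i)
  have hpsd : B.PosSemidef := by
    refine Matrix.PosSemidef.of_dotProduct_mulVec_nonneg hherm fun x => ?_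
    have := hq x
    simp only [dotProduct, Matrix.mulVec, Pi.star_apply, star_trivial, Finset.mul_sum]
    refine le_of_le_of_eq this ?_
    exact Finset.sum_congr rfl fun a _ => Finset.sum_congr rfl fun b _ => by ring
  have hB0 : (0 : Matrix (Fin n) (Fin n) ℝ) ≤ B := Matrix.nonneg_iff_posSemidef.mpr hpsd
  refine ⟨fun i m => CFC.sqrt B i m, fun i j => ?_⟩
  have h1 : B = CFC.sqrt B * CFC.sqrt B := (CFC.sqrt_mul_sqrt_self B hB0).symm
  have h2 : ∀ a b, CFC.sqrt B a b = CFC.sqrt B b a := by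
    intro a b
    have := (Matrix.nonneg_iff_posSemidef.mp (CFC.sqrt_nonneg B)).1
    conv_lhs => rw [← this]
    simp [Matrix.conjTranspose_apply]
  calc B i j = ∑ m, CFC.sqrt B i m * CFC.sqrt B m j := by
        conv_lhs => rw [h1]
        rfl
    _ = ∑ m, CFC.sqrt B i m * CFC.sqrt B j m := by
        exact Finset.sum_congr rfl fun m _ => by rw [h2 m j]

set_option maxHeartbeats 1000000 in
lemma gram_exp_nonneg {n : ℕ} (v : Fin n → Fin n → ℝ) (d : Fin n → ℝ) :
    0 ≤ ∑ i, ∑ j, d i * d j * Real.exp (∑ m, v i m * v j m) := by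
  have hexp : ∀ x : ℝ, Real.exp x = ∑' k : ℕ, x ^ k / k.factorial := by
    intro x
    rw [Real.exp_eq_exp_ℝ, NormedSpace.exp_eq_tsum_div]
  have hsum : ∀ i j : Fin n, Summable (fun k : ℕ =>
      d i * d j * ((∑ m, v i m * v j m) ^ k / k.factorial)) :=
    fun i j => (Real.summable_pow_div_factorial _).mul_left _
  have hsum2 : ∀ i : Fin n, Summable (fun k : ℕ =>
      ∑ j, d i * d j * ((∑ m, v i m * v j m) ^ k / k.factorial)) :=
    fun i => summable_sum fun j _ => hsum i j
  calc (0:ℝ) ≤ ∑' k : ℕ, ∑ i, ∑ j, d i * d j * ((∑ m, v i m * v j m) ^ k / k.factorial) := by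
        refine tsum_nonneg fun k => ?_
        have := gram_pow_nonneg v d k
        have h2 : ∑ i, ∑ j, d i * d j * ((∑ m, v i m * v j m) ^ k / k.factorial)
            = (∑ i, ∑ j, d i * d j * (∑ m, v i m * v j m) ^ k) / k.factorial := by
          rw [Finset.sum_div]
          exact Finset.sum_congr rfl fun i _ => by rw [Finset.sum_div]; exact Finset.sum_congr rfl fun j _ => by ring
        rw [h2]
        positivity
    _ = ∑ i, ∑ j, d i * d j * Real.exp (∑ m, v i m * v j m) := by
        rw [Summable.tsum_finsetSum (fun i _ => hsum2 i)]
        refine Finset.sum_congr rfl fun i _ => ?_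
        rw [Summable.tsum_finsetSum (fun j _ => hsum i j)]
        refine Finset.sum_congr rfl fun j _ => ?_
        rw [hexp, ← tsum_mul_left]

lemma exp_nd_psd {n : ℕ} (a : Fin (n+1) → Fin (n+1) → ℝ)
    (hdiag : ∀ i, a i i = 0)
    (hsym : ∀ i j, a i j = a j i)
    (hneg : ∀ c : Fin (n+1) → ℝ, ∑ i, c i = 0 → ∑ i, ∑ j, c i * c j * a i j ≤ 0)
    (lam : ℝ) (hlam : 0 ≤ lam) (c : Fin (n+1) → ℝ) :
    0 ≤ ∑ i, ∑ j, c i * c j * Real.exp (-(lam * a i j)) := by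
  -- quadratic form inequality
  have hquad : ∀ d : Fin (n+1) → ℝ,
      0 ≤ ∑ i, ∑ j, d i * d j * (a i 0 + a j 0 - a i j) := by
    intro d
    set s := ∑ i, d i with hs
    set T1 := ∑ i, ∑ j, d i * d j * a i j with hT1
    set T2 := ∑ i, d i * a i 0 with hT2
    have hT1' : ∑ i, d i * ∑ j, d j * a i j = T1 := by
      refine Finset.sum_congr rfl fun i _ => ?_
      rw [Finset.mul_sum]
      exact Finset.sum_congr rfl fun j _ => by ring
    set e : Fin (n+1) → ℝ := fun i => d i - (if i = 0 then s else 0) with he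
    have hE : ∀ f : Fin (n+1) → ℝ, ∑ j, e j * f j = (∑ j, d j * f j) - s * f 0 := by
      intro f
      have h : ∀ j, e j * f j = d j * f j - (if j = 0 then s * f j else 0) := by
        intro j
        by_cases h : j = 0 <;> simp [he, h] <;> ring
      simp_rw [h, Finset.sum_sub_distrib, Finset.sum_ite_eq', Finset.mem_univ, if_true]
    have hsum0 : ∑ i, e i = 0 := by
      have := hE (fun _ => 1)
      simpa [hs] using this
    have htot := hneg e hsum0
    have hlin : ∀ g : Fin (n+1) → ℝ,
        ∑ i, d i * ((∑ j, d j * a i j) - s * a i 0) = T1 - T2 * s := by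
      intro g
      have h : ∀ i, d i * ((∑ j, d j * a i j) - s * a i 0)
          = d i * (∑ j, d j * a i j) - (d i * a i 0) * s := fun i => by ring
      simp_rw [h, Finset.sum_sub_distrib, hT1', ← Finset.sum_mul]
      rw [← hT2]
    have hexpand : ∑ i, ∑ j, e i * e j * a i j = T1 - 2 * s * T2 := by
      have h1 : ∀ i, ∑ j, e i * e j * a i j = e i * ((∑ j, d j * a i j) - s * a i 0) := by
        intro i
        rw [← hE (fun j => a i j), Finset.mul_sum]
        exact Finset.sum_congr rfl fun j _ => by ring
      simp_rw [h1]
      rw [hE (fun i => (∑ j, d j * a i j) - s * a i 0)]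
      rw [hlin (fun _ => 0)]
      have h2 : ∑ j, d j * a 0 j = T2 := by
        rw [hT2]; exact Finset.sum_congr rfl fun j _ => by rw [hsym 0 j]
      rw [h2, hdiag 0]
      ring
    have hfin : ∑ i, ∑ j, d i * d j * (a i 0 + a j 0 - a i j)
        = 2 * s * T2 - T1 := by
      have h : ∀ i, ∑ j, d i * d j * (a i 0 + a j 0 - a i j)
          = (d i * a i 0) * s + d i * (∑ j, d j * a j 0) - d i * (∑ j, d j * a i j) := by
        intro i
        have h' : ∀ j, d i * d j * (a i 0 + a j 0 - a i j)
            = (d i * a i 0) * d j + d i * (d j * a j 0) - d i * (d j * a i j) := fun j => by ring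
        simp_rw [h', Finset.sum_sub_distrib, Finset.sum_add_distrib, ← Finset.mul_sum]
        rw [← hs]
      simp_rw [h, Finset.sum_sub_distrib, Finset.sum_add_distrib, hT1', ← Finset.sum_mul,
        ← hT2, ← hs]
      ring
    rw [hfin]
    rw [hexpand] at htot
    linarith
  -- build PSD matrix and Gram decomposition
  set B : Matrix (Fin (n+1)) (Fin (n+1)) ℝ :=
    fun i j => lam * (a i 0 + a j 0 - a i j) with hB
  obtain ⟨v, hv⟩ := psd_gram B
    (fun i j => by simp only [hB]; rw [hsym i j]; ring)
    (by
      intro d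
      have := hquad d
      have heq : ∑ i, ∑ j, d i * d j * B i j
          = lam * ∑ i, ∑ j, d i * d j * (a i 0 + a j 0 - a i j) := by
        rw [Finset.mul_sum]
        refine Finset.sum_congr rfl fun i _ => ?_
        rw [Finset.mul_sum]
        exact Finset.sum_congr rfl fun j _ => by simp only [hB]; ring
      rw [heq]
      positivity)
  have hexp : ∀ i j, Real.exp (-(lam * a i j))
      = Real.exp (-(lam * a i 0)) * Real.exp (-(lam * a j 0)) * Real.exp (∑ m, v i m * v j m) := by
    intro i j
    rw [← hv i j, ← Real.exp_add, ← Real.exp_add]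
    congr 1
    simp only [hB]
    ring
  have := gram_exp_nonneg v (fun i => c i * Real.exp (-(lam * a i 0)))
  calc (0:ℝ) ≤ ∑ i, ∑ j, (c i * Real.exp (-(lam * a i 0))) * (c j * Real.exp (-(lam * a j 0)))
      * Real.exp (∑ m, v i m * v j m) := this
    _ = ∑ i, ∑ j, c i * c j * Real.exp (-(lam * a i j)) := by
      refine Finset.sum_congr rfl fun i _ => Finset.sum_congr rfl fun j _ => ?_
      rw [hexp i j]
      ring

lemma one_sub_exp_neg_le (x : ℝ) (hx : 0 ≤ x) : 1 - Real.exp (-x) ≤ x := by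
  have := Real.add_one_le_exp (-x)
  linarith

lemma one_sub_exp_neg_nonneg (x : ℝ) (hx : 0 ≤ x) : 0 ≤ 1 - Real.exp (-x) := by
  have : Real.exp (-x) ≤ 1 := Real.exp_le_one_iff.mpr (by linarith)
  linarith

lemma cont_aux (t H : ℝ) : ContinuousOn (fun lam : ℝ => (1 - Real.exp (-(lam * t))) * lam ^ (-1-H)) (Ioi 0) := by
  apply ContinuousOn.mul
  · exact (continuous_const.sub ((continuous_id.mul continuous_const).neg.rexp)).continuousOn
  · exact ContinuousOn.rpow_const continuousOn_id fun x hx => Or.inl (ne_of_gt hx)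

lemma int_aux {H : ℝ} (h0 : 0 < H) (h1 : H < 1) (t : ℝ) (ht : 0 ≤ t) :
    IntegrableOn (fun lam : ℝ => (1 - Real.exp (-(lam * t))) * lam ^ (-1-H)) (Ioi 0) := by
  have hmeas : ∀ s ⊆ Ioi (0:ℝ), MeasurableSet s →
      AEStronglyMeasurable (fun lam : ℝ => (1 - Real.exp (-(lam * t))) * lam ^ (-1-H))
        (volume.restrict s) := fun s hs hsm =>
    ((cont_aux t H).mono hs).aestronglyMeasurable hsm
  have h01 : IntegrableOn (fun lam : ℝ => (1 - Real.exp (-(lam * t))) * lam ^ (-1-H)) (Ioc 0 1) := by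
    have hg : IntegrableOn (fun lam : ℝ => t * lam ^ (-H)) (Ioc 0 1) := by
      have : IntervalIntegrable (fun lam : ℝ => lam ^ (-H)) volume 0 1 :=
        intervalIntegral.intervalIntegrable_rpow' (by linarith)
      exact ((intervalIntegrable_iff_integrableOn_Ioc_of_le (by norm_num)).mp this).const_mul t
    refine hg.mono' (hmeas _ Ioc_subset_Ioi_self measurableSet_Ioc) ?_
    filter_upwards [ae_restrict_mem measurableSet_Ioc] with lam hlam
    have hl : 0 < lam := hlam.1
    have h1e := one_sub_exp_neg_le (lam * t) (by positivity)
    have h0e := one_sub_exp_neg_nonneg (lam * t) (by positivity)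
    have hrp : (0:ℝ) ≤ lam ^ (-1-H) := Real.rpow_nonneg hl.le _
    rw [Real.norm_eq_abs, abs_of_nonneg (by positivity)]
    calc (1 - Real.exp (-(lam * t))) * lam ^ (-1-H) ≤ (lam * t) * lam ^ (-1-H) := by
          exact mul_le_mul_of_nonneg_right h1e hrp
      _ = t * lam ^ (-H) := by
          rw [show (-H : ℝ) = (-1-H) + 1 by ring, Real.rpow_add_one hl.ne']
          ring
  have h1i : IntegrableOn (fun lam : ℝ => (1 - Real.exp (-(lam * t))) * lam ^ (-1-H)) (Ioi 1) := by
    have hg : IntegrableOn (fun lam : ℝ => lam ^ (-1-H)) (Ioi 1) :=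
      integrableOn_Ioi_rpow_of_lt (by linarith) one_pos
    refine hg.mono' (hmeas _ (fun x hx => Set.mem_Ioi.mpr (lt_trans one_pos (Set.mem_Ioi.mp hx))) measurableSet_Ioi) ?_
    filter_upwards [ae_restrict_mem measurableSet_Ioi] with lam hlam
    have hl : (0:ℝ) < lam := lt_trans one_pos hlam
    have h0e := one_sub_exp_neg_nonneg (lam * t) (by positivity)
    have h1e : 1 - Real.exp (-(lam * t)) ≤ 1 := by
      have := Real.exp_pos (-(lam * t)); linarith
    have hrp : (0:ℝ) ≤ lam ^ (-1-H) := Real.rpow_nonneg hl.le _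
    rw [Real.norm_eq_abs, abs_of_nonneg (by positivity)]
    nlinarith
  have heq : Ioc (0:ℝ) 1 ∪ Set.Ioi 1 = Set.Ioi 0 := Set.Ioc_union_Ioi_eq_Ioi (by norm_num)
  rw [← heq]
  exact h01.union h1i

noncomputable def cH (H : ℝ) : ℝ := ∫ u in Ioi (0:ℝ), (1 - Real.exp (-u)) * u ^ (-1-H)

lemma cH_int {H : ℝ} (h0 : 0 < H) (h1 : H < 1) :
    IntegrableOn (fun u : ℝ => (1 - Real.exp (-u)) * u ^ (-1-H)) (Ioi 0) := by
  have := int_aux h0 h1 1 zero_le_one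
  simpa using this

lemma cH_pos {H : ℝ} (h0 : 0 < H) (h1 : H < 1) : 0 < cH H := by
  have hnn : 0 ≤ᵐ[volume.restrict (Ioi (0:ℝ))]
      fun u : ℝ => (1 - Real.exp (-u)) * u ^ (-1-H) := by
    filter_upwards [ae_restrict_mem measurableSet_Ioi] with u hu
    have := one_sub_exp_neg_nonneg u (le_of_lt hu)
    have := Real.rpow_nonneg (le_of_lt (show (0:ℝ) < u from hu)) (-1-H)
    positivity
  rw [cH, setIntegral_pos_iff_support_of_nonneg_ae hnn (cH_int h0 h1)]
  have hsup : Ioi (0:ℝ) ⊆ Function.support (fun u : ℝ => (1 - Real.exp (-u)) * u ^ (-1-H)) := by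
    intro u hu
    have hu' : (0:ℝ) < u := hu
    have h1e : 0 < 1 - Real.exp (-u) := by
      have : Real.exp (-u) < 1 := Real.exp_lt_one_iff.mpr (by linarith)
      linarith
    have h2 : (0:ℝ) < u ^ (-1-H) := Real.rpow_pos_of_pos hu' _
    exact ne_of_gt (by positivity)
  have : Function.support (fun u : ℝ => (1 - Real.exp (-u)) * u ^ (-1-H)) ∩ Set.Ioi (0:ℝ) = Set.Ioi (0:ℝ) :=
    inter_eq_self_of_subset_right hsup
  rw [this]
  simp

lemma key_integral {H : ℝ} (h0 : 0 < H) (h1 : H < 1) {t : ℝ} (ht : 0 ≤ t) :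
    ∫ lam in Ioi (0:ℝ), (1 - Real.exp (-(lam * t))) * lam ^ (-1-H) = t ^ H * cH H := by
  rcases eq_or_lt_of_le ht with rfl | htpos
  · simp [Real.zero_rpow (ne_of_gt h0)]
  · set g : ℝ → ℝ := fun u => ((1 - Real.exp (-u)) * u ^ (-1-H)) * t ^ (1+H) with hg
    have hcongr : ∫ lam in Ioi (0:ℝ), (1 - Real.exp (-(lam * t))) * lam ^ (-1-H)
        = ∫ lam in Ioi (0:ℝ), g (lam * t) := by
      refine setIntegral_congr_fun measurableSet_Ioi fun lam hlam => ?_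
      have hl : (0:ℝ) < lam := hlam
      simp only [hg]
      rw [Real.mul_rpow hl.le htpos.le]
      rw [show (1 - Real.exp (-(lam * t))) * (lam ^ (-1-H) * t ^ (-1-H)) * t ^ (1+H)
          = (1 - Real.exp (-(lam * t))) * lam ^ (-1-H) * (t ^ (-1-H) * t ^ (1+H)) by ring]
      rw [← Real.rpow_add htpos]
      norm_num
    rw [hcongr, MeasureTheory.integral_comp_mul_right_Ioi g 0 htpos]
    simp only [zero_mul, smul_eq_mul]
    rw [show ∫ u in Ioi (0:ℝ), g u = (∫ u in Ioi (0:ℝ), (1 - Real.exp (-u)) * u ^ (-1-H)) * t ^ (1+H) from integral_mul_const _ _]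
    rw [← cH]
    rw [show t⁻¹ = t ^ (-1:ℝ) by rw [Real.rpow_neg_one]]
    rw [show t ^ (-1:ℝ) * (cH H * t ^ (1+H)) = (t ^ (-1:ℝ) * t ^ (1+H)) * cH H by ring]
    rw [← Real.rpow_add htpos]
    norm_num

/-- If K is a nonnegative negative definite kernel then K^H is negative definite
for every 0 ≤ H ≤ 1. -/
theorem negDef_rpow {E : Type*} (K : E → E → ℝ)
    (hnonneg : ∀ x y, 0 ≤ K x y)
    (hdiag : ∀ x, K x x = 0)
    (hsym : ∀ x y, K x y = K y x)
    (hneg : ∀ (n : ℕ) (x : Fin n → E) (c : Fin n → ℝ), ∑ i, c i = 0 →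
      ∑ i, ∑ j, c i * c j * K (x i) (x j) ≤ 0)
    (H : ℝ) (h0 : 0 ≤ H) (h1 : H ≤ 1) :
    ∀ (n : ℕ) (x : Fin n → E) (c : Fin n → ℝ), ∑ i, c i = 0 →
      ∑ i, ∑ j, c i * c j * (K (x i) (x j)) ^ H ≤ 0 := by
  intro n x c hc
  rcases eq_or_lt_of_le h0 with rfl | h0'
  · simp only [Real.rpow_zero, mul_one]
    rw [← Finset.sum_mul_sum]
    rw [hc]
    simp
  rcases eq_or_lt_of_le h1 with rfl | h1'
  · simp only [Real.rpow_one]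
    exact hneg n x c hc
  cases n with
  | zero => simp
  | succ m =>
    set a : Fin (m+1) → Fin (m+1) → ℝ := fun i j => K (x i) (x j) with ha
    have hadiag : ∀ i, a i i = 0 := fun i => hdiag (x i)
    have hasym : ∀ i j, a i j = a j i := fun i j => hsym (x i) (x j)
    have haneg : ∀ c' : Fin (m+1) → ℝ, ∑ i, c' i = 0 →
        ∑ i, ∑ j, c' i * c' j * a i j ≤ 0 := fun c' h => hneg (m+1) x c' h
    have hanonneg : ∀ i j, 0 ≤ a i j := fun i j => hnonneg (x i) (x j)
    -- S(lam) ≥ 0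
    have hS : ∀ lam : ℝ, 0 ≤ lam →
        0 ≤ ∑ i, ∑ j, c i * c j * Real.exp (-(lam * a i j)) :=
      fun lam hlam => exp_nd_psd a hadiag hasym haneg lam hlam c
    have hcH := cH_pos h0' h1'
    -- suffices to show the scaled sum is nonpositive
    suffices hkey : (∑ i, ∑ j, c i * c j * a i j ^ H) * cH H ≤ 0 by
      have h4 : (∑ i, ∑ j, c i * c j * a i j ^ H) * cH H ≤ 0 * cH H := by
        rw [zero_mul]; exact hkey
      exact le_of_mul_le_mul_right h4 hcH
    -- integrability of each summand
    have hint : ∀ i j : Fin (m+1), MeasureTheory.Integrable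
        (fun lam : ℝ => c i * c j * ((1 - Real.exp (-(lam * a i j))) * lam ^ (-1-H)))
        (MeasureTheory.volume.restrict (Set.Ioi 0)) :=
      fun i j => (int_aux h0' h1' (a i j) (hanonneg i j)).const_mul _
    have step1 : (∑ i, ∑ j, c i * c j * a i j ^ H) * cH H
        = ∑ i, ∑ j, ∫ lam in Set.Ioi (0:ℝ),
            c i * c j * ((1 - Real.exp (-(lam * a i j))) * lam ^ (-1-H)) := by
      rw [Finset.sum_mul]
      refine Finset.sum_congr rfl fun i _ => ?_
      rw [Finset.sum_mul]
      refine Finset.sum_congr rfl fun j _ => ?_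
      rw [MeasureTheory.integral_const_mul, key_integral h0' h1' (hanonneg i j)]
      ring
    have step2 : ∑ i, ∑ j, (∫ lam in Set.Ioi (0:ℝ),
            c i * c j * ((1 - Real.exp (-(lam * a i j))) * lam ^ (-1-H)))
        = ∫ lam in Set.Ioi (0:ℝ), ∑ i, ∑ j,
            c i * c j * ((1 - Real.exp (-(lam * a i j))) * lam ^ (-1-H)) := by
      rw [MeasureTheory.integral_finset_sum Finset.univ
        (fun i _ => MeasureTheory.integrable_finset_sum Finset.univ (fun j _ => hint i j))]
      refine Finset.sum_congr rfl fun i _ => ?_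
      rw [MeasureTheory.integral_finset_sum Finset.univ (fun j _ => hint i j)]
    rw [step1, step2]
    refine MeasureTheory.integral_nonpos_of_ae ?_
    filter_upwards [MeasureTheory.ae_restrict_mem measurableSet_Ioi] with lam hlam
    have hl : (0:ℝ) < lam := hlam
    have hp : (0:ℝ) ≤ lam ^ (-1-H) := Real.rpow_nonneg hl.le _
    have hsplit : ∑ i, ∑ j, c i * c j * ((1 - Real.exp (-(lam * a i j))) * lam ^ (-1-H))
        = ((∑ i, ∑ j, c i * c j) - ∑ i, ∑ j, c i * c j * Real.exp (-(lam * a i j)))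
            * lam ^ (-1-H) := by
      have h' : ∀ i j, c i * c j * ((1 - Real.exp (-(lam * a i j))) * lam ^ (-1-H))
          = (c i * c j) * lam ^ (-1-H)
            - (c i * c j * Real.exp (-(lam * a i j))) * lam ^ (-1-H) := fun i j => by ring
      simp_rw [h', Finset.sum_sub_distrib, ← Finset.sum_mul]
      ring
    rw [hsplit]
    have hzero : ∑ i, ∑ j, c i * c j = 0 := by
      rw [← Finset.sum_mul_sum, hc]
      simp
    rw [hzero]
    have := hS lam hl.le
    have : (0:ℝ) - ∑ i, ∑ j, c i * c j * Real.exp (-(lam * a i j)) ≤ 0 := by linarith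
    exact mul_nonpos_of_nonpos_of_nonneg this hp

end
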